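/- Let (μ : M → P) be a crossed module, ι : P → Q a group homomorphism, and (∂ : I → Q) together with (j, ι) : (μ : M → P) → (∂ : I → Q) an induced crossed module of (μ : M → P) along ι. If M is a finite group and the image ι(P) has finite index in Q, then the group I is finite. -/

import Mathlib

universe u

/-- A crossed module `(μ : M → P)`: groups `M`, `P`, a (right) action of `P` on `M` by
group automorphisms, written `act m p` for `m ^ p`, and a homomorphism `μ : M →* P`
satisfying CM1: `μ (m ^ p) = p⁻¹ * μ m * p` and CM2: `n ^ (μ m) = m⁻¹ * n * m`. -/
structure CrossedModule (M P : Type u) [Group M] [Group P] where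
  μ : M →* P
  act : M → P → M
  act_mul : ∀ m n p, act (m * n) p = act m p * act n p
  act_one : ∀ m, act m 1 = m
  act_act : ∀ m p q, act (act m p) q = act m (p * q)
  cm1 : ∀ m p, μ (act m p) = p⁻¹ * μ m * p
  cm2 : ∀ m n, act n (μ m) = m⁻¹ * n * m

/-- A morphism of crossed modules `(f, g) : (μ : M → P) → (ν : N → Q)`:
group homomorphisms `f : M → N`, `g : P → Q` with `ν ∘ f = g ∘ μ` and
`f (m ^ p) = (f m) ^ (g p)`. -/
def CrossedModule.IsMorphism {M P N Q : Type u} [Group M] [Group P] [Group N] [Group Q]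
    (X : CrossedModule M P) (Y : CrossedModule N Q) (f : M →* N) (g : P →* Q) : Prop :=
  (∀ m, Y.μ (f m) = g (X.μ m)) ∧ ∀ m p, f (X.act m p) = Y.act (f m) (g p)

/-- `(∂ : I → Q)` together with `j : M → I` is an induced crossed module of `(μ : M → P)`
along `ι : P → Q`: `(j, ι)` is a morphism of crossed modules, and for every crossed module
`(ν : N → Q)` and morphism `(f, ι) : (μ : M → P) → (ν : N → Q)` there is a unique group
homomorphism `φ : I → N` with `ν ∘ φ = ∂`, `φ (x ^ q) = (φ x) ^ q`, and `φ ∘ j = f`. -/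
def IsInducedCrossedModule {M P Q I : Type u} [Group M] [Group P] [Group Q] [Group I]
    (X : CrossedModule M P) (ι : P →* Q) (Y : CrossedModule I Q) (j : M →* I) : Prop :=
  CrossedModule.IsMorphism X Y j ι ∧
  ∀ (N : Type u) [Group N] (Z : CrossedModule N Q) (f : M →* N),
    CrossedModule.IsMorphism X Z f ι →
    ∃! φ : I →* N, (∀ x, Z.μ (φ x) = Y.μ x) ∧
      (∀ x q, φ (Y.act x q) = Z.act (φ x) q) ∧ ∀ m, φ (j m) = f m

open scoped commutatorElement

/-- A commutator with factors modified by central elements is unchanged. -/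
theorem commutator_central_aux {G : Type*} [Group G] (g h z w : G)
    (hz : z ∈ Subgroup.center G) (hw : w ∈ Subgroup.center G) :
    ⁅g * z, h * w⁆ = ⁅g, h⁆ := by
  have key : ∀ a b c : G, c ∈ Subgroup.center G → (a * c) * b * (a * c)⁻¹ = a * b * a⁻¹ := by
    intro a b c hc
    have hcb := Subgroup.mem_center_iff.mp hc b
    calc (a * c) * b * (a * c)⁻¹ = a * (c * b * c⁻¹) * a⁻¹ := by group
      _ = a * (b * (c * c⁻¹)) * a⁻¹ := by rw [← hcb, mul_assoc b]
      _ = a * b * a⁻¹ := by group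
  have key2 : ∀ a b c : G, c ∈ Subgroup.center G →
      a * (b * c) * a⁻¹ * (b * c)⁻¹ = a * b * a⁻¹ * b⁻¹ := by
    intro a b c hc
    have hca := Subgroup.mem_center_iff.mp hc a⁻¹
    calc a * (b * c) * a⁻¹ * (b * c)⁻¹ = a * b * (c * a⁻¹ * c⁻¹) * b⁻¹ := by group
      _ = a * b * (a⁻¹ * (c * c⁻¹)) * b⁻¹ := by rw [← hca, mul_assoc a⁻¹]
      _ = a * b * a⁻¹ * b⁻¹ := by group
  rw [commutatorElement_def, commutatorElement_def, key g (h * w) z hz, key2 g h w hw]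

/-- Dietzmann-type lemma: a group generated by a finite, conjugation-invariant set of
torsion elements is finite. -/
theorem finite_of_conj_invariant_torsion_gens (G : Type u) [Group G] (S : Set G)
    (hfin : S.Finite) (htop : Subgroup.closure S = ⊤)
    (htor : ∀ s ∈ S, IsOfFinOrder s)
    (hconj : ∀ (g : G), ∀ s ∈ S, g * s * g⁻¹ ∈ S) : Finite G := by
  haveI : Finite ↥S := hfin.to_subtype
  -- conjugation permutation action on S
  let π : G →* Equiv.Perm ↥S :=
    { toFun := fun g =>
        { toFun := fun s => ⟨g * s * g⁻¹, hconj g s s.2⟩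
          invFun := fun s => ⟨g⁻¹ * s * g, by simpa using hconj g⁻¹ s s.2⟩
          left_inv := fun s => by ext; simp [mul_assoc]
          right_inv := fun s => by ext; simp [mul_assoc] }
      map_one' := by ext s; simp
      map_mul' := fun g h => by ext s; simp [Equiv.Perm.mul_apply, mul_assoc] }
  haveI : Finite π.range := Subtype.finite
  haveI : π.ker.FiniteIndex := inferInstance
  have hker : π.ker ≤ Subgroup.center G := by
    intro g hg
    rw [Subgroup.mem_center_iff]
    have hcomm : ∀ s ∈ S, g * s = s * g := by
      intro s hs
      have := congrArg (fun e : Equiv.Perm ↥S => (e ⟨s, hs⟩ : G)) hg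
      simp only [Equiv.Perm.one_apply] at this
      have h2 : g * s * g⁻¹ = s := this
      calc g * s = g * s * g⁻¹ * g := by group
        _ = s * g := by rw [h2]
    intro h
    have hh : h ∈ Subgroup.closure S := htop ▸ Subgroup.mem_top h
    induction hh using Subgroup.closure_induction with
    | mem s hs => exact (hcomm s hs).symm
    | one => simp
    | mul a b _ _ ha hb => rw [mul_assoc, hb, ← mul_assoc, ha, mul_assoc]
    | inv a _ ha =>
        calc a⁻¹ * g = a⁻¹ * (g * a) * a⁻¹ := by group
          _ = a⁻¹ * (a * g) * a⁻¹ := by rw [← ha]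
          _ = g * a⁻¹ := by group
  haveI hctr : (Subgroup.center G).FiniteIndex := Subgroup.finiteIndex_of_le hker
  -- finitely many commutators
  have hcs : (commutatorSet G).Finite := by
    haveI : Finite (G ⧸ Subgroup.center G) := inferInstance
    apply Set.Finite.subset (Set.finite_range
      (fun c : (G ⧸ Subgroup.center G) × (G ⧸ Subgroup.center G) => ⁅c.1.out, c.2.out⁆))
    rintro x ⟨g, h, rfl⟩
    refine ⟨(QuotientGroup.mk g, QuotientGroup.mk h), ?_⟩
    obtain ⟨zg, hzg⟩ := QuotientGroup.mk_out_eq_mul (s := Subgroup.center G) g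
    obtain ⟨zh, hzh⟩ := QuotientGroup.mk_out_eq_mul (s := Subgroup.center G) h
    simp only []
    rw [hzg, hzh, commutator_central_aux g h zg zh zg.2 zh.2]
  haveI : Finite (commutatorSet G) := hcs.to_subtype
  haveI hcomm : Finite (commutator G) := inferInstance
  -- abelianization is finite
  have hsurj : Function.Surjective (Abelianization.of (G := G)) :=
    fun x => QuotientGroup.mk'_surjective (commutator G) x
  haveI hfg : Group.FG (Abelianization G) := by
    rw [Group.fg_iff]
    refine ⟨Abelianization.of '' S, ?_, hfin.image _⟩
    rw [← MonoidHom.map_closure, htop, ← MonoidHom.range_eq_map,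
      MonoidHom.range_eq_top]
    exact hsurj
  have htorab : Monoid.IsTorsion (Abelianization G) := by
    intro x
    have hx : x ∈ Subgroup.closure (Abelianization.of '' S) := by
      rw [← MonoidHom.map_closure, htop, ← MonoidHom.range_eq_map,
        MonoidHom.range_eq_top.mpr hsurj]
      trivial
    induction hx using Subgroup.closure_induction with
    | mem s hs =>
        obtain ⟨t, ht, rfl⟩ := hs
        exact Abelianization.of.isOfFinOrder (htor t ht)
    | one => exact IsOfFinOrder.one
    | mul a b _ _ ha hb => exact (Commute.all a b).isOfFinOrder_mul ha hb
    | inv a _ ha => exact ha.inv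
  haveI : Finite (Abelianization G) := CommGroup.finite_of_fg_torsion _ htorab
  haveI : Finite (G ⧸ commutator G) := ‹Finite (Abelianization G)›
  exact Finite.of_equiv _ (Subgroup.groupEquivQuotientProdSubgroup (s := commutator G)).symm

/-- If `(∂ : I → Q)`, `(j, ι)` is an induced crossed module of `(μ : M → P)` along `ι`,
`M` is finite and `ι(P)` has finite index in `Q`, then `I` is finite. -/
theorem inducedCrossedModule_finite {M P Q I : Type u} [Group M] [Group P] [Group Q] [Group I]
    (X : CrossedModule M P) (ι : P →* Q) (Y : CrossedModule I Q) (j : M →* I)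
    (hInd : IsInducedCrossedModule X ι Y j)
    (hM : Finite M) (hQ : ι.range.FiniteIndex) :
    Finite I := by
  classical
  haveI := hM
  haveI := hQ
  haveI : Finite (Q ⧸ ι.range) := inferInstance
  obtain ⟨⟨hμ, hact⟩, huniv⟩ := hInd
  -- `Y.act · q` is a monoid hom
  have act_one' : ∀ q : Q, Y.act 1 q = 1 := by
    intro q
    have h := Y.act_mul 1 1 q
    rw [one_mul] at h
    exact (left_eq_mul.mp h)
  let ψ : Q → I →* I := fun q =>
    { toFun := fun x => Y.act x q
      map_one' := act_one' q
      map_mul' := fun a b => Y.act_mul a b q }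
  -- the generating set
  let S : Set I := Set.range
    (fun mc : M × (Q ⧸ ι.range) => Y.act (j mc.1) (Quotient.out mc.2)⁻¹)
  have hSfin : S.Finite := Set.finite_range _
  have hmemS : ∀ (m : M) (q : Q), Y.act (j m) q ∈ S := by
    intro m q
    set c := QuotientGroup.mk (s := ι.range) q⁻¹ with hc
    have h2 : (QuotientGroup.mk (s := ι.range) q⁻¹) = QuotientGroup.mk c.out :=
      (QuotientGroup.out_eq' c).symm
    have h1 : q * c.out ∈ ι.range := by simpa using QuotientGroup.eq.mp h2
    obtain ⟨p, hp⟩ := h1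
    refine ⟨(X.act m p, c), ?_⟩
    show Y.act (j (X.act m p)) c.out⁻¹ = Y.act (j m) q
    rw [hact, Y.act_act, hp, mul_inv_cancel_right]
  set K := Subgroup.closure S with hK
  have hKstable : ∀ (q : Q), ∀ x ∈ K, Y.act x q ∈ K := by
    intro q x hx
    induction hx using Subgroup.closure_induction with
    | mem s hs =>
        obtain ⟨⟨m, c⟩, rfl⟩ := hs
        refine Subgroup.subset_closure ?_
        rw [Y.act_act]
        exact hmemS m _
    | one => rw [act_one' q]; exact K.one_mem
    | mul a b _ _ ha hb => rw [Y.act_mul]; exact K.mul_mem ha hb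
    | inv a _ ha =>
        have h3 : Y.act a⁻¹ q = (Y.act a q)⁻¹ := map_inv (ψ q) a
        rw [h3]; exact K.inv_mem ha
  have jmemK : ∀ m, j m ∈ K := by
    intro m
    have h := hmemS m 1
    rw [Y.act_one] at h
    exact Subgroup.subset_closure h
  -- restricted crossed module on K
  let Z : CrossedModule (↥K) Q :=
    { μ := Y.μ.comp K.subtype
      act := fun x q => ⟨Y.act x q, hKstable q x x.2⟩
      act_mul := fun a b q => Subtype.ext (Y.act_mul a b q)
      act_one := fun a => Subtype.ext (Y.act_one a)
      act_act := fun a p q => Subtype.ext (Y.act_act a p q)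
      cm1 := fun a p => Y.cm1 a p
      cm2 := fun a b => Subtype.ext (Y.cm2 a b) }
  let f : M →* ↥K := j.codRestrict K jmemK
  have hmor : CrossedModule.IsMorphism X Z f ι :=
    ⟨fun m => hμ m, fun m p => Subtype.ext (hact m p)⟩
  obtain ⟨φ, ⟨hφ1, hφ2, hφ3⟩, -⟩ := huniv (↥K) Z f hmor
  obtain ⟨θ, -, hθuniq⟩ := huniv I Y j ⟨hμ, hact⟩
  have h1 : K.subtype.comp φ = θ := by
    refine hθuniq _ ⟨fun x => hφ1 x, fun x q => ?_, fun m => ?_⟩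
    · exact congrArg Subtype.val (hφ2 x q)
    · exact congrArg Subtype.val (hφ3 m)
  have h2 : MonoidHom.id I = θ := hθuniq _ ⟨fun x => rfl, fun x q => rfl, fun m => rfl⟩
  have h3 : K.subtype.comp φ = MonoidHom.id I := h1.trans h2.symm
  have htop : Subgroup.closure S = ⊤ := by
    rw [← hK]
    refine (Subgroup.eq_top_iff' _).mpr fun x => ?_
    have h4 : (φ x : I) = x := congrArg (fun (g : I →* I) => g x) h3
    exact h4 ▸ (φ x).2
  have htor : ∀ s ∈ S, IsOfFinOrder s := by
    rintro s ⟨⟨m, c⟩, rfl⟩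
    exact (ψ (Quotient.out c)⁻¹).isOfFinOrder (j.isOfFinOrder (isOfFinOrder_of_finite m))
  have hconj : ∀ (g : I), ∀ s ∈ S, g * s * g⁻¹ ∈ S := by
    rintro g s ⟨⟨m, c⟩, rfl⟩
    have h5 := Y.cm2 g⁻¹ (Y.act (j m) (Quotient.out c)⁻¹)
    rw [inv_inv] at h5
    rw [← h5, Y.act_act]
    exact hmemS m _
  exact finite_of_conj_invariant_torsion_gens I S hSfin htop htor hconj
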